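/- Chain rule for observational entropy under sequential coarse-graining: let p_{ij} ≥ 0 be a joint probability distribution with marginals p_j = ∑_i p_{ij}, and let V_{ij} > 0 with V_j = ∑_i V_{ij}. Then -∑_j p_j ln(p_j/V_j) + ∑_{ij} p_{ij} ln(p_{ij}/V_{ij}) = D_KL(P‖Q) where P_{ij} = p_{ij} and Q_{ij} = (V_{ij}/V_j) p_j. Consequently the observational entropy is non-increasing under refinement by an additional measurement: -∑_{ij} p_{ij} ln(p_{ij}/V_{ij}) ≤ -∑_j p_j ln(p_j/V_j), with equality iff p_{ij} = (V_{ij}/V_j) p_j whenever p_j ≠ 0. -/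

import Mathlib

open BigOperators

private lemma log_eq_sub_one_iff {x : ℝ} (hx : 0 < x) :
    Real.log x = x - 1 ↔ x = 1 := by
  constructor
  · intro h
    by_contra hne
    exact absurd h (ne_of_lt (Real.log_lt_sub_one_of_pos hx hne))
  · rintro rfl; simp

/-- Gibbs' inequality with equality condition, over a fintype. -/
private lemma gibbs {α : Type*} [Fintype α] (w q : α → ℝ)
    (hw : ∀ i, 0 ≤ w i) (hq : ∀ i, 0 ≤ q i)
    (hqz : ∀ i, q i = 0 → w i = 0)
    (hsum : ∑ i, q i = ∑ i, w i) :
    0 ≤ ∑ i, w i * Real.log (w i / q i) ∧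
      ((∑ i, w i * Real.log (w i / q i)) = 0 ↔ ∀ i, w i = q i) := by
  have key : ∀ i, w i - q i ≤ w i * Real.log (w i / q i) := by
    intro i
    rcases eq_or_lt_of_le (hw i) with h0 | hwi
    · rw [← h0]; simp; linarith [hq i]
    · have hqi : 0 < q i := by
        rcases eq_or_lt_of_le (hq i) with h0 | h; · exact absurd (hqz i h0.symm) (by linarith)
        · exact h
      have hlog : Real.log (q i / w i) ≤ q i / w i - 1 :=
        Real.log_le_sub_one_of_pos (div_pos hqi hwi)
      have : Real.log (w i / q i) = - Real.log (q i / w i) := by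
        rw [← Real.log_inv, inv_div]
      rw [this]
      have h2 : w i * (1 - q i / w i) ≤ w i * (- Real.log (q i / w i)) := by
        apply mul_le_mul_of_nonneg_left (by linarith) (le_of_lt hwi)
      calc w i - q i = w i * (1 - q i / w i) := by field_simp
        _ ≤ _ := h2
  have hsum0 : ∑ i, (w i - q i) = 0 := by
    rw [Finset.sum_sub_distrib, hsum]; ring
  have hle : ∑ i, (w i - q i) ≤ ∑ i, w i * Real.log (w i / q i) :=
    Finset.sum_le_sum (fun i _ => key i)
  constructor
  · linarith
  constructor
  · intro hzero
    have heq : ∀ i ∈ Finset.univ, w i - q i = w i * Real.log (w i / q i) := by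
      rw [← Finset.sum_eq_sum_iff_of_le (fun i _ => key i)]
      rw [hsum0, hzero]
    intro i
    have hi := heq i (Finset.mem_univ i)
    rcases eq_or_lt_of_le (hw i) with h0 | hwi
    · -- w i = 0, so -q i = 0
      rw [← h0] at hi ⊢
      simp at hi; linarith
    · have hqi : 0 < q i := by
        rcases eq_or_lt_of_le (hq i) with h0 | h; · exact absurd (hqz i h0.symm) (by linarith)
        · exact h
      have hwne : w i ≠ 0 := ne_of_gt hwi
      have hL : Real.log (w i / q i) = (w i - q i) / w i := by
        field_simp
        linear_combination -hi
      have hlogneg : Real.log (q i / w i) = - Real.log (w i / q i) := by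
        rw [← Real.log_inv, inv_div]
      have h3 : Real.log (q i / w i) = q i / w i - 1 := by
        rw [hlogneg, hL]
        field_simp
        ring
      have := (log_eq_sub_one_iff (div_pos hqi hwi)).mp h3
      field_simp at this
      linarith
  · intro hwq
    apply Finset.sum_eq_zero
    intro i _
    rcases eq_or_lt_of_le (hw i) with h0 | hwi
    · rw [← h0]; ring
    · rw [hwq i, div_self (ne_of_gt (lt_of_lt_of_le hwi (le_of_eq (hwq i))))]
      simp

/-- chain rule for observational entropy under sequential coarse-graining,
non-increase of observational entropy under refinement, and the equality condition. -/
theorem obs_entropy_chain_rule {ι κ : Type*} [Fintype ι] [Fintype κ]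
    (p V : ι → κ → ℝ)
    (hp : ∀ i j, 0 ≤ p i j) (hpsum : ∑ i, ∑ j, p i j = 1)
    (hV : ∀ i j, 0 < V i j)
    (pm Vm : κ → ℝ)
    (hpm : ∀ j, pm j = ∑ i, p i j) (hVm : ∀ j, Vm j = ∑ i, V i j) :
    (-∑ j, pm j * Real.log (pm j / Vm j) + ∑ i, ∑ j, p i j * Real.log (p i j / V i j)
        = ∑ i, ∑ j, p i j * Real.log (p i j / ((V i j / Vm j) * pm j)))
    ∧ (-∑ i, ∑ j, p i j * Real.log (p i j / V i j) ≤ -∑ j, pm j * Real.log (pm j / Vm j))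
    ∧ ((-∑ i, ∑ j, p i j * Real.log (p i j / V i j) = -∑ j, pm j * Real.log (pm j / Vm j))
        ↔ ∀ i j, pm j ≠ 0 → p i j = (V i j / Vm j) * pm j) := by
  have hpmnn : ∀ j, 0 ≤ pm j := fun j => (hpm j) ▸ Finset.sum_nonneg (fun i _ => hp i j)
  haveI hne : Nonempty ι := by
    by_contra h
    rw [not_nonempty_iff] at h
    rw [Finset.univ_eq_empty, Finset.sum_empty] at hpsum
    norm_num at hpsum
  have hVmpos : ∀ j, 0 < Vm j := fun j => (hVm j) ▸ Finset.sum_pos (fun i _ => hV i j)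
    Finset.univ_nonempty
  have hpm0 : ∀ i j, pm j = 0 → p i j = 0 := by
    intro i j h
    have := (Finset.sum_eq_zero_iff_of_nonneg (fun i _ => hp i j)).mp ((hpm j) ▸ h)
    exact this i (Finset.mem_univ i)
  have hppm : ∀ i j, p i j ≤ pm j := by
    intro i j
    rw [hpm j]
    exact Finset.single_le_sum (fun i _ => hp i j) (Finset.mem_univ i)
  -- pointwise chain rule
  have key : ∀ i j, p i j * Real.log (p i j / ((V i j / Vm j) * pm j))
      = p i j * Real.log (p i j / V i j) - p i j * Real.log (pm j / Vm j) := by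
    intro i j
    rcases eq_or_lt_of_le (hp i j) with h0 | hpij
    · rw [← h0]; ring
    · have hpmj : 0 < pm j := lt_of_lt_of_le hpij (hppm i j)
      have hne : ∀ x : ℝ, 0 < x → x ≠ 0 := fun x hx => ne_of_gt hx
      rw [Real.log_div (ne_of_gt hpij)
          (ne_of_gt (mul_pos (div_pos (hV i j) (hVmpos j)) hpmj)),
        Real.log_div (ne_of_gt hpij) (ne_of_gt (hV i j)),
        Real.log_div (ne_of_gt hpmj) (ne_of_gt (hVmpos j)),
        Real.log_mul (ne_of_gt (div_pos (hV i j) (hVmpos j))) (ne_of_gt hpmj),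
        Real.log_div (ne_of_gt (hV i j)) (ne_of_gt (hVmpos j))]
      ring
  -- chain rule identity (statement 1)
  have chain : -∑ j, pm j * Real.log (pm j / Vm j)
      + ∑ i, ∑ j, p i j * Real.log (p i j / V i j)
      = ∑ i, ∑ j, p i j * Real.log (p i j / ((V i j / Vm j) * pm j)) := by
    have : ∑ i, ∑ j, p i j * Real.log (p i j / ((V i j / Vm j) * pm j))
        = ∑ i, ∑ j, (p i j * Real.log (p i j / V i j) - p i j * Real.log (pm j / Vm j)) := by
      apply Finset.sum_congr rfl; intro i _
      apply Finset.sum_congr rfl; intro j _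
      exact key i j
    rw [this]
    have : ∑ i, ∑ j, p i j * Real.log (pm j / Vm j) = ∑ j, pm j * Real.log (pm j / Vm j) := by
      rw [Finset.sum_comm]
      apply Finset.sum_congr rfl; intro j _
      rw [← Finset.sum_mul, ← hpm j]
    simp only [Finset.sum_sub_distrib]
    rw [this]; ring
  -- Gibbs on the product type
  set q : ι × κ → ℝ := fun x => (V x.1 x.2 / Vm x.2) * pm x.2 with hqdef
  set w : ι × κ → ℝ := fun x => p x.1 x.2 with hwdef
  have hVsum : ∀ j, ∑ i, V i j / Vm j = 1 := by
    intro j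
    rw [← Finset.sum_div, ← hVm j, div_self (ne_of_gt (hVmpos j))]
  have hqsum : ∑ x : ι × κ, q x = ∑ x : ι × κ, w x := by
    rw [Fintype.sum_prod_type_right, Fintype.sum_prod_type_right]
    have h1 : ∑ j, ∑ i, q (i, j) = ∑ j, pm j := by
      apply Finset.sum_congr rfl; intro j _
      simp only [hqdef]
      rw [← Finset.sum_mul, hVsum j, one_mul]
    have h2 : ∑ j, ∑ i, w (i, j) = ∑ j, pm j := by
      apply Finset.sum_congr rfl; intro j _
      exact (hpm j).symm
    rw [h1, h2]
  obtain ⟨hge, hiff⟩ := gibbs w q (fun x => hp x.1 x.2)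
    (fun x => mul_nonneg (le_of_lt (div_pos (hV x.1 x.2) (hVmpos x.2))) (hpmnn x.2))
    (by
      intro x hx
      have hvpos : 0 < V x.1 x.2 / Vm x.2 := div_pos (hV x.1 x.2) (hVmpos x.2)
      have : pm x.2 = 0 := by
        by_contra h
        exact absurd hx (ne_of_gt (mul_pos hvpos (lt_of_le_of_ne (hpmnn x.2) (Ne.symm h))))
      exact hpm0 x.1 x.2 this)
    hqsum
  have hprod : ∑ x : ι × κ, w x * Real.log (w x / q x)
      = ∑ i, ∑ j, p i j * Real.log (p i j / ((V i j / Vm j) * pm j)) := by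
    rw [Fintype.sum_prod_type]
  refine ⟨chain, ?_, ?_⟩
  · have := hprod ▸ hge
    linarith [chain]
  · constructor
    · intro heq
      have hzero : ∑ x : ι × κ, w x * Real.log (w x / q x) = 0 := by
        rw [hprod]; linarith [chain]
      intro i j _
      exact hiff.mp hzero (i, j)
    · intro hall
      have hz : ∑ x : ι × κ, w x * Real.log (w x / q x) = 0 := by
        apply hiff.mpr
        intro x
        by_cases h : pm x.2 = 0
        · simp only [hwdef, hqdef, h, mul_zero]
          exact hpm0 x.1 x.2 h
        · exact hall x.1 x.2 h
      rw [hprod] at hz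
      linarith [chain]
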